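/- Let M be an irreducible nonnegative k×k matrix with Perron eigenvalue λ and positive eigenvector v (Mv = λv), and let M̄ be an (k+l)×(k+l) nonnegative matrix of block form M̄ = [[M, 0],[A, B]] (upper-left block M, upper-right block zero, lower blocks A and B arbitrary nonnegative). Suppose w ∈ ℝ^{k+l} is a positive vector whose first k entries equal v and which satisfies M̄w ≤ λw entrywise. Then for every irreducible principal submatrix N of M̄ whose index set contains at least one of the last l indices at which M̄w is strictly less than λw in some power (i.e., (M̄^p w)_i < λ^p w_i for some p ≥ 1 and i in the index set of N), the Perron eigenvalue of N satisfies λ(N) < λ. -/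

import Mathlib

/-- A nonnegative square matrix is irreducible if for every pair of indices
some positive power has a strictly positive corresponding entry. -/
def MatIrreducible {n : Type*} [Fintype n] [DecidableEq n]
    (N : Matrix n n ℝ) : Prop :=
  ∀ i j : n, ∃ p : ℕ, 1 ≤ p ∧ 0 < (N ^ p) i j

/-- The Perron–Frobenius eigenvalue of a nonnegative irreducible matrix:
the supremum of real eigenvalues admitting a nonzero nonnegative eigenvector
(by Perron–Frobenius theory this is the spectral radius). -/
noncomputable def perronEig {n : Type*} [Fintype n] [DecidableEq n]
    (N : Matrix n n ℝ) : ℝ :=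
  sSup {r : ℝ | ∃ v : n → ℝ, v ≠ 0 ∧ (∀ i, 0 ≤ v i) ∧ N.mulVec v = r • v}

/-- Powers of entrywise nonnegative matrices are entrywise nonnegative. -/
lemma pow_entry_nonneg {n : Type*} [Fintype n] [DecidableEq n]
    (A : Matrix n n ℝ) (h : ∀ i j, 0 ≤ A i j) (q : ℕ) :
    ∀ i j, 0 ≤ (A ^ q) i j := by
  induction q with
  | zero =>
    intro i j
    simp only [pow_zero, Matrix.one_apply]
    split <;> norm_num
  | succ q ih =>
    intro i j
    rw [pow_succ, Matrix.mul_apply]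
    exact Finset.sum_nonneg fun c _ => mul_nonneg (ih i c) (h c j)

/-- mulVec by a nonnegative matrix is monotone. -/
lemma mulVec_mono {n : Type*} [Fintype n]
    (A : Matrix n n ℝ) (h : ∀ i j, 0 ≤ A i j) {x y : n → ℝ}
    (hxy : ∀ i, x i ≤ y i) : ∀ i, A.mulVec x i ≤ A.mulVec y i := by
  intro i
  exact Finset.sum_le_sum fun c _ => mul_le_mul_of_nonneg_left (hxy c) (h i c)

lemma mulVec_pow_eig {n : Type*} [Fintype n] [DecidableEq n]
    {A : Matrix n n ℝ} {u : n → ℝ} {r : ℝ} (h : A.mulVec u = r • u) (q : ℕ) :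
    (A ^ q).mulVec u = r ^ q • u := by
  induction q with
  | zero => simp [Matrix.one_mulVec]
  | succ q ih =>
    rw [pow_succ', ← Matrix.mulVec_mulVec, ih, Matrix.mulVec_smul, h, smul_smul,
      pow_succ', mul_comm]

lemma mulVec_entry_nonneg {n : Type*} [Fintype n]
    (A : Matrix n n ℝ) (h : ∀ i j, 0 ≤ A i j) {x : n → ℝ}
    (hx : ∀ i, 0 ≤ x i) (i : n) : 0 ≤ A.mulVec x i := by
  simp only [Matrix.mulVec, dotProduct]
  exact Finset.sum_nonneg fun c _ => mul_nonneg (h i c) (hx c)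

theorem stmt12 {k l : ℕ}
    (M : Matrix (Fin k) (Fin k) ℝ) (hM : ∀ i j, 0 ≤ M i j)
    (hirrM : MatIrreducible M)
    (lam : ℝ) (hlam : 0 < lam)
    (v : Fin k → ℝ) (hv : ∀ i, 0 < v i) (heig : M.mulVec v = lam • v)
    (Mbar : Matrix (Fin (k + l)) (Fin (k + l)) ℝ)
    (hMbar : ∀ i j, 0 ≤ Mbar i j)
    -- upper-left block of Mbar is M
    (hUL : ∀ a b : Fin k, Mbar (Fin.castAdd l a) (Fin.castAdd l b) = M a b)
    -- upper-right block of Mbar is zero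
    (hUR : ∀ (a : Fin k) (b : Fin l), Mbar (Fin.castAdd l a) (Fin.natAdd k b) = 0)
    (w : Fin (k + l) → ℝ) (hw : ∀ i, 0 < w i)
    -- the first k entries of w equal v
    (hwv : ∀ a : Fin k, w (Fin.castAdd l a) = v a)
    (hsub : ∀ i, Mbar.mulVec w i ≤ lam * w i)
    -- an irreducible principal submatrix of Mbar
    (I : Finset (Fin (k + l)))
    (N : Matrix I I ℝ) (hNdef : ∀ a b : I, N a b = Mbar a b)
    (hirrN : MatIrreducible N)
    -- I contains one of the last l indices with a strict deficiency in some power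
    (hstrict : ∃ p : ℕ, 1 ≤ p ∧ ∃ i ∈ I, k ≤ (i : ℕ) ∧
      (Mbar ^ p).mulVec w i < lam ^ p * w i) :
    perronEig N < lam := by
  classical
  obtain ⟨p, hp1, i, hiI, hik, hstr⟩ := hstrict
  set ihat : I := ⟨i, hiI⟩ with hihatdef
  -- entrywise nonnegativity of N
  have hNnn : ∀ a b : I, 0 ≤ N a b := fun a b => (hNdef a b) ▸ hMbar a b
  -- the restricted vector
  set wI : I → ℝ := fun c => w c with hwIdef
  have hwIpos : ∀ c : I, 0 < wI c := fun c => hw c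
  -- (Mbar^q w) ≤ lam^q w
  have hMq : ∀ q : ℕ, ∀ j, (Mbar ^ q).mulVec w j ≤ lam ^ q * w j := by
    intro q
    induction q with
    | zero => intro j; simp [Matrix.one_mulVec]
    | succ q ih =>
      intro j
      have h1 : (Mbar ^ (q + 1)).mulVec w j = Mbar.mulVec ((Mbar ^ q).mulVec w) j := by
        rw [pow_succ', ← Matrix.mulVec_mulVec]
      rw [h1]
      calc Mbar.mulVec ((Mbar ^ q).mulVec w) j
          ≤ Mbar.mulVec (fun t => lam ^ q * w t) j :=
            mulVec_mono Mbar hMbar (fun t => ih t) j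
        _ = lam ^ q * Mbar.mulVec w j := by
            rw [show (fun t => lam ^ q * w t) = lam ^ q • w from rfl, Matrix.mulVec_smul]; rfl
        _ ≤ lam ^ q * (lam * w j) :=
            mul_le_mul_of_nonneg_left (hsub j) (pow_nonneg hlam.le q)
        _ = lam ^ (q + 1) * w j := by ring
  -- (Mbar^q w) is nonnegative
  have hMqnn : ∀ q : ℕ, ∀ j, 0 ≤ (Mbar ^ q).mulVec w j := fun q j =>
    mulVec_entry_nonneg _ (pow_entry_nonneg Mbar hMbar q) (fun c => (hw c).le) j
  -- comparison: (N^q wI)_c ≤ (Mbar^q w)_c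
  have hcomp : ∀ q : ℕ, ∀ c : I, (N ^ q).mulVec wI c ≤ (Mbar ^ q).mulVec w c := by
    intro q
    induction q with
    | zero => intro c; simp [Matrix.one_mulVec]; exact le_rfl
    | succ q ih =>
      intro c
      have h1 : (N ^ (q + 1)).mulVec wI c = N.mulVec ((N ^ q).mulVec wI) c := by
        rw [pow_succ', ← Matrix.mulVec_mulVec]
      have h2 : (Mbar ^ (q + 1)).mulVec w c = Mbar.mulVec ((Mbar ^ q).mulVec w) c := by
        rw [pow_succ', ← Matrix.mulVec_mulVec]
      rw [h1, h2]
      calc N.mulVec ((N ^ q).mulVec wI) c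
          = ∑ d : I, N c d * (N ^ q).mulVec wI d := rfl
        _ ≤ ∑ d : I, Mbar c d * (Mbar ^ q).mulVec w d := by
            refine Finset.sum_le_sum fun d _ => ?_
            rw [hNdef c d]
            exact mul_le_mul_of_nonneg_left (ih d) (hMbar c d)
        _ = ∑ j ∈ I, Mbar c j * (Mbar ^ q).mulVec w j :=
            Finset.sum_coe_sort I (fun j => Mbar c j * (Mbar ^ q).mulVec w j)
        _ ≤ ∑ j : Fin (k + l), Mbar c j * (Mbar ^ q).mulVec w j := by
            refine Finset.sum_le_sum_of_subset_of_nonneg (I.subset_univ) fun j _ _ =>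
              mul_nonneg (hMbar c j) (hMqnn q j)
        _ = Mbar.mulVec ((Mbar ^ q).mulVec w) c := rfl
  -- (N^q wI)_c ≤ lam^q * wI c
  have hNq : ∀ q : ℕ, ∀ c : I, (N ^ q).mulVec wI c ≤ lam ^ q * wI c := fun q c =>
    (hcomp q c).trans (hMq q c)
  -- strict deficiency at ihat for exponent p
  have hstrI : (N ^ p).mulVec wI ihat < lam ^ p * wI ihat :=
    lt_of_le_of_lt (hcomp p ihat) hstr
  -- for each c : I there is q_c ≥ 1 with strict deficiency, persisting to larger exponents
  have hkey : ∀ c : I, ∃ qc : ℕ, 1 ≤ qc ∧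
      ∀ Q : ℕ, qc ≤ Q → (N ^ Q).mulVec wI c < lam ^ Q * wI c := by
    intro c
    obtain ⟨m, hm1, hmpos⟩ := hirrN c ihat
    refine ⟨m + p, le_add_right hm1, fun Q hQ => ?_⟩
    -- first: strict at exponent m+p
    have hstep : (N ^ (m + p)).mulVec wI c < lam ^ (m + p) * wI c := by
      have h1 : (N ^ (m + p)).mulVec wI c = (N ^ m).mulVec ((N ^ p).mulVec wI) c := by
        rw [Matrix.mulVec_mulVec, ← pow_add]
      rw [h1]
      have hlt : ∑ d : I, (N ^ m) c d * (N ^ p).mulVec wI d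
          < ∑ d : I, (N ^ m) c d * (lam ^ p * wI d) := by
        refine Finset.sum_lt_sum (fun d _ =>
          mul_le_mul_of_nonneg_left (hNq p d) (pow_entry_nonneg N hNnn m c d))
          ⟨ihat, Finset.mem_univ ihat, mul_lt_mul_of_pos_left hstrI hmpos⟩
      calc (N ^ m).mulVec ((N ^ p).mulVec wI) c
          = ∑ d : I, (N ^ m) c d * (N ^ p).mulVec wI d := rfl
        _ < ∑ d : I, (N ^ m) c d * (lam ^ p * wI d) := hlt
        _ = lam ^ p * ∑ d : I, (N ^ m) c d * wI d := by
            rw [Finset.mul_sum]; congr 1; funext d; ring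
        _ = lam ^ p * (N ^ m).mulVec wI c := rfl
        _ ≤ lam ^ p * (lam ^ m * wI c) :=
            mul_le_mul_of_nonneg_left (hNq m c) (pow_nonneg hlam.le p)
        _ = lam ^ (m + p) * wI c := by rw [pow_add]; ring
    -- persistence
    obtain ⟨s, rfl⟩ := Nat.exists_eq_add_of_le hQ
    have h1 : (N ^ (m + p + s)).mulVec wI c = (N ^ (m + p)).mulVec ((N ^ s).mulVec wI) c := by
      rw [Matrix.mulVec_mulVec, ← pow_add]
    rw [h1]
    have hNsnn : ∀ d : I, 0 ≤ (N ^ s).mulVec wI d := fun d =>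
      mulVec_entry_nonneg _ (pow_entry_nonneg N hNnn s) (fun e => (hwIpos e).le) d
    calc (N ^ (m + p)).mulVec ((N ^ s).mulVec wI) c
        ≤ (N ^ (m + p)).mulVec (fun d => lam ^ s * wI d) c :=
          mulVec_mono _ (pow_entry_nonneg N hNnn (m + p)) (fun d => hNq s d) c
      _ = lam ^ s * (N ^ (m + p)).mulVec wI c := by
          rw [show (fun d => lam ^ s * wI d) = lam ^ s • wI from rfl, Matrix.mulVec_smul]; rfl
      _ < lam ^ s * (lam ^ (m + p) * wI c) :=
          mul_lt_mul_of_pos_left hstep (pow_pos hlam s)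
      _ = lam ^ (m + p + s) * wI c := by rw [pow_add]; ring
  -- choose the common exponent Q
  choose qf hqf1 hqf using hkey
  have hInonempty : Nonempty I := ⟨ihat⟩
  set Q : ℕ := Finset.univ.sup qf with hQdef
  have hQc : ∀ c : I, (N ^ Q).mulVec wI c < lam ^ Q * wI c := fun c =>
    hqf c Q (Finset.le_sup (Finset.mem_univ c))
  have hQ1 : 1 ≤ Q := le_trans (hqf1 ihat) (Finset.le_sup (Finset.mem_univ ihat))
  have hQne : Q ≠ 0 := by omega
  -- the uniform ratio ρ
  obtain ⟨c0, _, hc0max⟩ := Finset.exists_max_image Finset.univ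
    (fun c : I => (N ^ Q).mulVec wI c / (lam ^ Q * wI c)) Finset.univ_nonempty
  set ρ : ℝ := (N ^ Q).mulVec wI c0 / (lam ^ Q * wI c0) with hρdef
  have hdenpos : ∀ c : I, 0 < lam ^ Q * wI c := fun c =>
    mul_pos (pow_pos hlam Q) (hwIpos c)
  have hNQnn : ∀ c : I, 0 ≤ (N ^ Q).mulVec wI c := fun c =>
    mulVec_entry_nonneg _ (pow_entry_nonneg N hNnn Q) (fun e => (hwIpos e).le) c
  have hρ0 : 0 ≤ ρ := div_nonneg (hNQnn c0) (hdenpos c0).le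
  have hρ1 : ρ < 1 := (div_lt_one (hdenpos c0)).2 (hQc c0)
  have hρbd : ∀ c : I, (N ^ Q).mulVec wI c ≤ ρ * (lam ^ Q * wI c) := fun c =>
    (div_le_iff₀ (hdenpos c)).1 (by
      have := hc0max c (Finset.mem_univ c)
      simpa [mul_comm] using this)
  -- the uniform bound  cbd = ρ^(1/Q) * lam < lam
  set cbd : ℝ := ρ ^ ((1 : ℝ) / Q) * lam with hcbddef
  have hcbd0 : 0 ≤ cbd := mul_nonneg (Real.rpow_nonneg hρ0 _) hlam.le
  have hcbdlt : cbd < lam := by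
    have h1 : ρ ^ ((1 : ℝ) / Q) < 1 :=
      Real.rpow_lt_one hρ0 hρ1 (by positivity)
    calc cbd < 1 * lam := by
          exact mul_lt_mul_of_pos_right h1 hlam
      _ = lam := one_mul lam
  have hcbdpow : cbd ^ Q = ρ * lam ^ Q := by
    rw [hcbddef, mul_pow]
    congr 1
    rw [← Real.rpow_natCast (ρ ^ ((1:ℝ)/Q)) Q, ← Real.rpow_mul hρ0]
    rw [one_div, inv_mul_cancel₀ (by exact_mod_cast hQne)]
    exact Real.rpow_one ρ
  -- every element of the eigenvalue set is ≤ cbd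
  refine lt_of_le_of_lt (Real.sSup_le ?_ hcbd0) hcbdlt
  rintro r ⟨u, hune, hunn, hueig⟩
  by_cases hrpos : 0 < r
  · -- find maximizing index for u/wI
    obtain ⟨j0, _, hj0max⟩ := Finset.exists_max_image Finset.univ
      (fun c : I => u c / wI c) Finset.univ_nonempty
    set t : ℝ := u j0 / wI j0 with htdef
    have ht0 : 0 < t := by
      obtain ⟨c, hc⟩ : ∃ c, u c ≠ 0 := Function.ne_iff.1 hune
      have hcpos : 0 < u c := lt_of_le_of_ne (hunn c) (Ne.symm hc)
      exact lt_of_lt_of_le (div_pos hcpos (hwIpos c)) (hj0max c (Finset.mem_univ c))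
    have htw : ∀ c : I, u c ≤ t * wI c := fun c =>
      (div_le_iff₀ (hwIpos c)).1 (by
        have := hj0max c (Finset.mem_univ c); simpa [mul_comm] using this)
    have huj0 : u j0 = t * wI j0 := by
      rw [htdef, div_mul_cancel₀ _ (hwIpos j0).ne']
    have huj0pos : 0 < u j0 := by rw [huj0]; exact mul_pos ht0 (hwIpos j0)
    -- r^Q * u j0 = (N^Q u) j0 ≤ t * (N^Q wI) j0 ≤ t ρ lam^Q wI j0 = ρ lam^Q u j0
    have heigQ : (N ^ Q).mulVec u = r ^ Q • u := mulVec_pow_eig hueig Q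
    have hchain : r ^ Q * u j0 ≤ ρ * lam ^ Q * u j0 := by
      have h1 : r ^ Q * u j0 = (N ^ Q).mulVec u j0 := by rw [heigQ]; rfl
      calc r ^ Q * u j0 = (N ^ Q).mulVec u j0 := h1
        _ ≤ (N ^ Q).mulVec (fun c => t * wI c) j0 :=
            mulVec_mono _ (pow_entry_nonneg N hNnn Q) htw j0
        _ = t * (N ^ Q).mulVec wI j0 := by
            rw [show (fun c => t * wI c) = t • wI from rfl, Matrix.mulVec_smul]; rfl
        _ ≤ t * (ρ * (lam ^ Q * wI j0)) :=
            mul_le_mul_of_nonneg_left (hρbd j0) ht0.le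
        _ = ρ * lam ^ Q * (t * wI j0) := by ring
        _ = ρ * lam ^ Q * u j0 := by rw [← huj0]
    have hrQ : r ^ Q ≤ cbd ^ Q := by
      rw [hcbdpow]
      exact le_of_mul_le_mul_right hchain huj0pos
    exact (pow_le_pow_iff_left₀ hrpos.le hcbd0 hQne).1 hrQ
  · exact le_trans (not_lt.1 hrpos) hcbd0
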